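/- Let A be an n-dimensional nilpotent left Leibniz algebra over ℂ with dim Z(A) = n − k and dim Leib(A) = 1. Then dim A² ≤ (k² − k + 2)/2. -/

import Mathlib

/-- The left Leibniz identity for a bilinear bracket:
`[a,[b,c]] = [[a,b],c] + [b,[a,c]]`. -/
def IsLeibnizBracket {K A : Type*} [CommRing K] [AddCommGroup A] [Module K A]
    (br : A →ₗ[K] A →ₗ[K] A) : Prop :=
  ∀ a b c : A, br a (br b c) = br (br a b) c + br b (br a c)

/-- The span of all brackets `[s,t]` with `s ∈ S`, `t ∈ T`. -/
def bracketSpan {K A : Type*} [CommRing K] [AddCommGroup A] [Module K A]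
    (br : A →ₗ[K] A →ₗ[K] A) (S T : Submodule K A) : Submodule K A :=
  Submodule.span K {x | ∃ s ∈ S, ∃ t ∈ T, br s t = x}

/-- Lower central series: `lcs br n = A^(n+1)`, i.e. `lcs br 0 = A¹ = A` and
`lcs br (n+1) = [A, lcs br n]`. -/
def lcs {K A : Type*} [CommRing K] [AddCommGroup A] [Module K A]
    (br : A →ₗ[K] A →ₗ[K] A) : ℕ → Submodule K A
  | 0 => ⊤
  | n + 1 => bracketSpan br ⊤ (lcs br n)

/-- `Leib(A)`: the span of all squares `[a,a]`. -/
def leibIdeal {K A : Type*} [CommRing K] [AddCommGroup A] [Module K A]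
    (br : A →ₗ[K] A →ₗ[K] A) : Submodule K A :=
  Submodule.span K {x | ∃ a : A, br a a = x}

/-- The center `Z(A) = {x : [a,x] = 0 = [x,a] for all a}`. -/
def leibnizCenter {K A : Type*} [CommRing K] [AddCommGroup A] [Module K A]
    (br : A →ₗ[K] A →ₗ[K] A) : Submodule K A where
  carrier := {x | ∀ a : A, br a x = 0 ∧ br x a = 0}
  add_mem' := by
    intro x y hx hy a
    constructor <;>
      simp [map_add, LinearMap.add_apply, (hx a).1, (hx a).2, (hy a).1, (hy a).2]
  zero_mem' := by
    intro a
    constructor <;> simp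
  smul_mem' := by
    intro c x hx a
    constructor <;>
      simp [map_smul, LinearMap.smul_apply, (hx a).1, (hx a).2]

/-- Two-sided ideal of a Leibniz algebra. -/
def IsLeibnizIdeal {K A : Type*} [CommRing K] [AddCommGroup A] [Module K A]
    (br : A →ₗ[K] A →ₗ[K] A) (I : Submodule K A) : Prop :=
  ∀ a : A, ∀ x ∈ I, br a x ∈ I ∧ br x a ∈ I

/-- If `A` is an `n`-dimensional nilpotent left Leibniz algebra over `ℂ` with
`dim Z(A) = n - k` and `dim Leib(A) = 1`, then `dim A² ≤ (k² - k + 2)/2`. -/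
theorem dim_derived_le_of_center_codim
    {A : Type*} [AddCommGroup A] [Module ℂ A] [FiniteDimensional ℂ A]
    (br : A →ₗ[ℂ] A →ₗ[ℂ] A) (hbr : IsLeibnizBracket br)
    (hnil : ∃ m : ℕ, lcs br m = ⊥)
    (n k : ℕ) (hk : k ≤ n)
    (hdim : Module.finrank ℂ A = n)
    (hcenter : Module.finrank ℂ ↥(leibnizCenter br) = n - k)
    (hleib : Module.finrank ℂ ↥(leibIdeal br) = 1) :
    2 * Module.finrank ℂ ↥(lcs br 1) ≤ k ^ 2 - k + 2 := by
  classical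
  set Z := leibnizCenter br with hZ
  set L := leibIdeal br with hL
  -- brackets are symmetric modulo L
  have hsymm : ∀ a b : A, br a b + br b a ∈ L := by
    intro a b
    have h1 : br (a + b) (a + b) ∈ L := Submodule.subset_span ⟨a + b, rfl⟩
    have h2 : br a a ∈ L := Submodule.subset_span ⟨a, rfl⟩
    have h3 : br b b ∈ L := Submodule.subset_span ⟨b, rfl⟩
    have heq : br a b + br b a = br (a + b) (a + b) - br a a - br b b := by
      simp only [map_add, LinearMap.add_apply]
      abel
    rw [heq]
    exact sub_mem (sub_mem h1 h2) h3
  have hsq : ∀ a : A, br a a ∈ L := fun a => Submodule.subset_span ⟨a, rfl⟩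
  obtain ⟨W, hW⟩ := Z.exists_isCompl
  have hrankW : Module.finrank ℂ W = k := by
    have h := Submodule.finrank_add_eq_of_isCompl hW
    rw [hcenter, hdim] at h
    omega
  let b : Module.Basis (Fin k) ℂ W := (Module.finBasis ℂ W).reindex (finCongr hrankW)
  let e : Fin k → A := fun i => (b i : A)
  have hWspan : (W : Submodule ℂ A) = Submodule.span ℂ (Set.range e) := by
    have : Set.range e = W.subtype '' Set.range b := by
      ext x
      simp [e, Set.range_comp]
    rw [this, ← Submodule.map_span, b.span_eq, Submodule.map_top, Submodule.range_subtype]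
  -- A² is contained in [W, W]
  have hD : lcs br 1 ≤ Submodule.map₂ br W W := by
    show bracketSpan br ⊤ (lcs br 0) ≤ _
    rw [bracketSpan, Submodule.span_le]
    rintro x ⟨s, -, t, -, rfl⟩
    have hs : s ∈ Z ⊔ W := by rw [hW.sup_eq_top]; trivial
    have ht : t ∈ Z ⊔ W := by rw [hW.sup_eq_top]; trivial
    obtain ⟨z, hz, w, hw, rfl⟩ := Submodule.mem_sup.1 hs
    obtain ⟨z', hz', w', hw', rfl⟩ := Submodule.mem_sup.1 ht
    have hz2 : ∀ a : A, br a z = 0 ∧ br z a = 0 := hz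
    have hz'2 : ∀ a : A, br a z' = 0 ∧ br z' a = 0 := hz'
    have : br (z + w) (z' + w') = br w w' := by
      simp only [map_add, LinearMap.add_apply, (hz2 _).2, (hz'2 _).1, (hz2 _).1]
      simp [(hz'2 w).1]
    rw [this]
    exact Submodule.apply_mem_map₂ br hw hw'
  have hmap2 : Submodule.map₂ br W W
      = Submodule.span ℂ (Set.range fun p : Fin k × Fin k => br (e p.1) (e p.2)) := by
    rw [hWspan, Submodule.map₂_span_span, Set.image2_range]
  -- pass to quotient by L
  let π := L.mkQ
  let s : Finset (Fin k × Fin k) :=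
    (Finset.univ : Finset (Fin k)).offDiag.filter fun p => p.1 < p.2
  let gens : Finset (A ⧸ L) := s.image fun p => π (br (e p.1) (e p.2))
  have hpiL : ∀ x ∈ L, π x = 0 := fun x hx => (Submodule.Quotient.mk_eq_zero L).2 hx
  have hmapD : Submodule.map π (lcs br 1) ≤ Submodule.span ℂ (gens : Set (A ⧸ L)) := by
    refine le_trans (Submodule.map_mono hD) ?_
    rw [hmap2, Submodule.map_span, Submodule.span_le]
    rintro x ⟨y, ⟨p, rfl⟩, rfl⟩
    rcases lt_trichotomy p.1 p.2 with hlt | heq | hgt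
    · apply Submodule.subset_span
      exact Finset.mem_image.2 ⟨p, by simp [s, Finset.mem_offDiag, hlt, hlt.ne], rfl⟩
    · have : br (e p.1) (e p.2) ∈ L := heq ▸ hsq (e p.1)
      rw [hpiL _ this]
      exact Submodule.zero_mem _
    · have hmem : π (br (e p.2) (e p.1)) ∈ Submodule.span ℂ (gens : Set (A ⧸ L)) := by
        apply Submodule.subset_span
        exact Finset.mem_image.2 ⟨(p.2, p.1), by simp [s, Finset.mem_offDiag, hgt, hgt.ne], rfl⟩
      have hsum : π (br (e p.1) (e p.2)) + π (br (e p.2) (e p.1)) = 0 := by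
        rw [← map_add]; exact hpiL _ (hsymm _ _)
      have : π (br (e p.1) (e p.2)) = -π (br (e p.2) (e p.1)) :=
        eq_neg_of_add_eq_zero_left hsum
      rw [this]
      exact neg_mem hmem
  have hcard : 2 * s.card ≤ k ^ 2 - k := by
    have hsub : s.card + ((Finset.univ : Finset (Fin k)).offDiag.filter fun p => ¬ p.1 < p.2).card
        = (Finset.univ : Finset (Fin k)).offDiag.card :=
      Finset.card_filter_add_card_filter_not _
    have hle : s.card ≤
        ((Finset.univ : Finset (Fin k)).offDiag.filter fun p => ¬ p.1 < p.2).card := by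
      apply Finset.card_le_card_of_injOn (fun p => p.swap)
      · intro p hp
        simp only [s, Finset.mem_coe, Finset.mem_filter, Finset.mem_offDiag] at hp ⊢
        exact ⟨⟨Finset.mem_univ _, Finset.mem_univ _, (hp.1.2.2 : p.1 ≠ p.2).symm⟩,
          not_lt.2 hp.2.le⟩
      · intro p _ q _ h
        exact Prod.ext (congrArg Prod.snd h) (congrArg Prod.fst h)
    have hoff : (Finset.univ : Finset (Fin k)).offDiag.card = k * k - k := by
      rw [Finset.offDiag_card, Finset.card_univ, Fintype.card_fin]
    have : k ^ 2 = k * k := sq k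
    omega
  -- rank-nullity for the restriction of π to A²
  have hrn := LinearMap.finrank_range_add_finrank_ker (π.comp (lcs br 1).subtype)
  have hrange : LinearMap.range (π.comp (lcs br 1).subtype) = Submodule.map π (lcs br 1) := by
    rw [LinearMap.range_comp, Submodule.range_subtype]
  have hkerle : Module.finrank ℂ ↥(LinearMap.ker (π.comp (lcs br 1).subtype)) ≤ 1 := by
    have hmapker : Submodule.map (lcs br 1).subtype
        (LinearMap.ker (π.comp (lcs br 1).subtype)) ≤ L := by
      rintro x ⟨y, hy, rfl⟩
      have : π (y : A) = 0 := hy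
      exact (Submodule.Quotient.mk_eq_zero L).1 this
    calc Module.finrank ℂ ↥(LinearMap.ker (π.comp (lcs br 1).subtype))
        = Module.finrank ℂ ↥(Submodule.map (lcs br 1).subtype
            (LinearMap.ker (π.comp (lcs br 1).subtype))) :=
          (Submodule.finrank_map_subtype_eq _ _).symm
      _ ≤ Module.finrank ℂ ↥L := Submodule.finrank_mono hmapker
      _ = 1 := hleib
  have hrangele : Module.finrank ℂ ↥(LinearMap.range (π.comp (lcs br 1).subtype)) ≤ s.card := by
    rw [hrange]
    calc Module.finrank ℂ ↥(Submodule.map π (lcs br 1))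
        ≤ Module.finrank ℂ ↥(Submodule.span ℂ (gens : Set (A ⧸ L))) :=
          Submodule.finrank_mono hmapD
      _ ≤ gens.card := finrank_span_finset_le_card gens
      _ ≤ s.card := Finset.card_image_le
  omega
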